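/- If a randomized 2-selection mechanism with predictions is impartial, α-consistent, and β-robust, then β ≤ 3/4 and α + β ≤ 3/2. -/
import Mathlib


/-- `E` has no self-loops. -/
def NoLoops {n : ℕ} (E : Finset (Fin n × Fin n)) : Prop := ∀ i, (i, i) ∉ E

/-- The indegree of vertex `i` in the graph with edge set `E`. -/
def indeg {n : ℕ} (E : Finset (Fin n × Fin n)) (i : Fin n) : ℕ :=
  (E.filter (fun e => e.2 = i)).card

/-- The total indegree of a set `S` of vertices. -/
def indegS {n : ℕ} (E : Finset (Fin n × Fin n)) (S : Finset (Fin n)) : ℕ :=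
  ∑ i ∈ S, indeg E i

/-- `Δ_k(G)`: the maximum total indegree of a set of `k` vertices. -/
def maxDeg {n : ℕ} (k : ℕ) (E : Finset (Fin n × Fin n)) : ℕ :=
  (Finset.powersetCard k Finset.univ).sup (indegS E)

/-- A (randomized) selection mechanism with predictions: for each `n`,
given a predicted set and a graph, it assigns a selection probability to each vertex. -/
abbrev Mech : Type :=
  ∀ n : ℕ, Finset (Fin n) → Finset (Fin n × Fin n) → Fin n → ℝ

/-- The probabilities lie in `[0,1]` and sum to at most `k` on every valid input. -/
def ValidMech (k : ℕ) (f : Mech) : Prop :=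
  ∀ (n : ℕ) (Sh : Finset (Fin n)) (E : Finset (Fin n × Fin n)),
    Sh.card = k → NoLoops E →
      (∀ i, 0 ≤ f n Sh E i ∧ f n Sh E i ≤ 1) ∧ (∑ i, f n Sh E i) ≤ (k : ℝ)

/-- Impartiality: the probability of selecting `i` does not depend on `i`'s outgoing edges. -/
def Impartial (k : ℕ) (f : Mech) : Prop :=
  ∀ (n : ℕ) (Sh : Finset (Fin n)) (E E' : Finset (Fin n × Fin n)) (i : Fin n),
    Sh.card = k → NoLoops E → NoLoops E' →
    E.filter (fun e => e.1 ≠ i) = E'.filter (fun e => e.1 ≠ i) →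
    f n Sh E i = f n Sh E' i

/-- `α`-consistency: an `α`-approximation whenever the prediction is accurate. -/
def Consistent (k : ℕ) (α : ℝ) (f : Mech) : Prop :=
  ∀ (n : ℕ) (Sh : Finset (Fin n)) (E : Finset (Fin n × Fin n)),
    Sh.card = k → NoLoops E → indegS E Sh = maxDeg k E →
    α * (maxDeg k E : ℝ) ≤ ∑ i, f n Sh E i * (indeg E i : ℝ)

/-- `β`-robustness: a `β`-approximation regardless of the prediction. -/
def Robust (k : ℕ) (β : ℝ) (f : Mech) : Prop :=
  ∀ (n : ℕ) (Sh : Finset (Fin n)) (E : Finset (Fin n × Fin n)),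
    Sh.card = k → NoLoops E →
    β * (maxDeg k E : ℝ) ≤ ∑ i, f n Sh E i * (indeg E i : ℝ)



/-! ### Auxiliary definitions for the lower-bound construction (n = 3) -/

def ShX : Finset (Fin 3) := {0, 1}
def gA0 : Finset (Fin 3 × Fin 3) := {(0,1),(0,2)}
def gA1 : Finset (Fin 3 × Fin 3) := {(1,0),(1,2)}
def gA2 : Finset (Fin 3 × Fin 3) := {(2,0),(2,1)}
def gB01 : Finset (Fin 3 × Fin 3) := {(0,1),(0,2),(1,0),(1,2)}
def gB02 : Finset (Fin 3 × Fin 3) := {(0,1),(0,2),(2,0),(2,1)}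
def gB12 : Finset (Fin 3 × Fin 3) := {(1,0),(1,2),(2,0),(2,1)}
def gF : Finset (Fin 3 × Fin 3) := {(0,1),(0,2),(1,0),(1,2),(2,0),(2,1)}

/-- If a randomized 2-selection mechanism with predictions is impartial, `α`-consistent, and
`β`-robust, then `β ≤ 3/4` and `α + β ≤ 3/2`. -/
theorem upper_bound_two_selection (α β : ℝ) (hα₀ : 0 ≤ α) (hα₁ : α ≤ 1)
    (hβ₀ : 0 ≤ β) (hβ₁ : β ≤ 1) (f : Mech)
    (hvalid : ValidMech 2 f) (himp : Impartial 2 f)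
    (hcons : Consistent 2 α f) (hrob : Robust 2 β f) :
    β ≤ 3 / 4 ∧ α + β ≤ 3 / 2 := by
  classical
  have hc : ShX.card = 2 := by decide
  have nlA0 : NoLoops gA0 := by unfold NoLoops; decide
  have nlA1 : NoLoops gA1 := by unfold NoLoops; decide
  have nlA2 : NoLoops gA2 := by unfold NoLoops; decide
  have nlB01 : NoLoops gB01 := by unfold NoLoops; decide
  have nlB02 : NoLoops gB02 := by unfold NoLoops; decide
  have nlB12 : NoLoops gB12 := by unfold NoLoops; decide
  have nlF : NoLoops gF := by unfold NoLoops; decide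
  -- robustness on gA0, gA1, gA2, gF
  have r0 := hrob 3 ShX gA0 hc nlA0
  have r1 := hrob 3 ShX gA1 hc nlA1
  have r2 := hrob 3 ShX gA2 hc nlA2
  have rF := hrob 3 ShX gF hc nlF
  -- consistency on gA2 and gF
  have c2 := hcons 3 ShX gA2 hc nlA2 (by decide)
  have cF := hcons 3 ShX gF hc nlF (by decide)
  -- sums of probabilities at most 2 on the three B graphs
  have v01 := (hvalid 3 ShX gB01 hc nlB01).2
  have v02 := (hvalid 3 ShX gB02 hc nlB02).2
  have v12 := (hvalid 3 ShX gB12 hc nlB12).2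
  -- impartiality identifications
  have e1 : f 3 ShX gB01 1 = f 3 ShX gA0 1 := himp 3 ShX gB01 gA0 1 hc nlB01 nlA0 (by decide)
  have e2 : f 3 ShX gB02 2 = f 3 ShX gA0 2 := himp 3 ShX gB02 gA0 2 hc nlB02 nlA0 (by decide)
  have e3 : f 3 ShX gB01 0 = f 3 ShX gA1 0 := himp 3 ShX gB01 gA1 0 hc nlB01 nlA1 (by decide)
  have e4 : f 3 ShX gB12 2 = f 3 ShX gA1 2 := himp 3 ShX gB12 gA1 2 hc nlB12 nlA1 (by decide)
  have e5 : f 3 ShX gB02 0 = f 3 ShX gA2 0 := himp 3 ShX gB02 gA2 0 hc nlB02 nlA2 (by decide)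
  have e6 : f 3 ShX gB12 1 = f 3 ShX gA2 1 := himp 3 ShX gB12 gA2 1 hc nlB12 nlA2 (by decide)
  have e7 : f 3 ShX gF 0 = f 3 ShX gB12 0 := himp 3 ShX gF gB12 0 hc nlF nlB12 (by decide)
  have e8 : f 3 ShX gF 1 = f 3 ShX gB02 1 := himp 3 ShX gF gB02 1 hc nlF nlB02 (by decide)
  have e9 : f 3 ShX gF 2 = f 3 ShX gB01 2 := himp 3 ShX gF gB01 2 hc nlF nlB01 (by decide)
  -- rewrite the maxDeg values and expand all sums
  rw [show maxDeg 2 gA0 = 2 from by decide] at r0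
  rw [show maxDeg 2 gA1 = 2 from by decide] at r1
  rw [show maxDeg 2 gA2 = 2 from by decide] at r2 c2
  rw [show maxDeg 2 gF = 4 from by decide] at rF cF
  rw [Fin.sum_univ_three] at r0 r1 r2 rF c2 cF v01 v02 v12
  rw [show indeg gA0 0 = 0 from by decide, show indeg gA0 1 = 1 from by decide,
      show indeg gA0 2 = 1 from by decide] at r0
  rw [show indeg gA1 0 = 1 from by decide, show indeg gA1 1 = 0 from by decide,
      show indeg gA1 2 = 1 from by decide] at r1
  rw [show indeg gA2 0 = 1 from by decide, show indeg gA2 1 = 1 from by decide,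
      show indeg gA2 2 = 0 from by decide] at r2 c2
  rw [show indeg gF 0 = 2 from by decide, show indeg gF 1 = 2 from by decide,
      show indeg gF 2 = 2 from by decide] at rF cF
  push_cast at r0 r1 r2 rF c2 cF v01 v02 v12
  constructor
  · nlinarith [r0, r1, r2, rF, v01, v02, v12]
  · nlinarith [r0, r1, c2, cF, v01, v02, v12]
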